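/- Let α > 0, let a, b ∈ ℝ with a ≥ α and b ≥ α, let y, p ∈ ℝ², and let g_a, g_b ∈ ℝ. If −(b−a)·(y·p) + g_b − g_a + ((b−a)²/(2b))·( y·p − ‖y‖₂·‖p‖₂ ) ≥ 0, then −(b−a)·(y·p)·( 2a/(b+a) ) + g_b − g_a ≥ 0. -/
import Mathlib


open RealInnerProductSpace

/-- The two-dimensional elliptic-shape maximum principle inequality implies the ball-shape
maximum principle inequality (with factor `a·d/(b+a(d−1)) = 2a/(b+a)` for `d = 2`). -/
theorem stmt_14 (α : ℝ) (hα : 0 < α) (a b : ℝ) (ha : α ≤ a) (hb : α ≤ b)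
    (y p : EuclideanSpace ℝ (Fin 2)) (ga gb : ℝ)
    (h : -(b - a) * ⟪y, p⟫ + gb - ga +
        (b - a) ^ 2 / (2 * b) * (⟪y, p⟫ - ‖y‖ * ‖p‖) ≥ 0) :
    -(b - a) * ⟪y, p⟫ * (2 * a / (b + a)) + gb - ga ≥ 0 := by
  have ha0 : 0 < a := lt_of_lt_of_le hα ha
  have hb0 : 0 < b := lt_of_lt_of_le hα hb
  have hba : (0:ℝ) < b + a := by linarith
  have hcs : |⟪y, p⟫| ≤ ‖y‖ * ‖p‖ := abs_real_inner_le_norm y p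
  obtain ⟨h1, h2⟩ := abs_le.mp hcs
  set s : ℝ := ⟪y, p⟫ with hs
  set N : ℝ := ‖y‖ * ‖p‖ with hN
  set c : ℝ := (b - a) ^ 2 / (2 * b) with hcdef
  set k : ℝ := 2 * a / (b + a) with hkdef
  have hc0 : 0 ≤ c := by positivity
  have hflip : c * (s - N) = -(c * (N - s)) := by ring
  rcases le_total 0 s with hsgn | hsgn
  · -- s ≥ 0
    have hcN : 0 ≤ c * (N - s) := mul_nonneg hc0 (by linarith)
    have hD : gb - ga ≥ (b - a) * s := by
      rw [ge_iff_le] at h; linarith [hflip]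
    have hdiv : 0 ≤ (b - a) ^ 2 * s / (b + a) :=
      div_nonneg (mul_nonneg (sq_nonneg _) hsgn) hba.le
    have heq : (b - a) * s * (1 - k) = (b - a) ^ 2 * s / (b + a) := by
      rw [hkdef]; field_simp; ring
    have : (b - a) * s * k ≤ (b - a) * s := by nlinarith [heq, hdiv]
    linarith
  · -- s ≤ 0
    have hD2 : gb - ga ≥ (b - a) * s + c * (N - s) := by
      rw [ge_iff_le] at h; linarith [hflip]
    have hNs : (-2) * s ≤ N - s := by linarith
    have hcc : c * ((-2) * s) ≤ c * (N - s) := mul_le_mul_of_nonneg_left hNs hc0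
    have heq2 : (b - a) * s + c * ((-2) * s) - (b - a) * s * k
        = (-s) * (a * (b - a) ^ 2 / (b * (b + a))) := by
      rw [hkdef, hcdef]; field_simp; ring
    have hpos : 0 ≤ (-s) * (a * (b - a) ^ 2 / (b * (b + a))) := by
      apply mul_nonneg (by linarith); positivity
    linarith [heq2, hpos, hcc, hD2]
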